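/- Let f : {0,1}³ → {0,1} be an elementary cellular automaton local rule with f(0,0,0) = 0, and set c₇ = f(1,1,1), S₂ = f(1,1,0)+f(1,0,1)+f(0,1,1), S₁ = f(1,0,0)+f(0,1,0)+f(0,0,1). Suppose c₇ − S₂ + S₁ = 0 and 2S₁ > S₂. Then for λ ∈ (0, 1/S₁] the set of solutions in [0,1] of the mean-field fixed-point equation is {0}, while for λ ∈ (1/S₁, 1) it is exactly {0, (λS₁−1)/(λ(2S₁−S₂))}, and in the latter case the nonzero solution lies in (0,1]. -/

import Mathlib

/-- Real value of a binary cell. -/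
def bitR (b : Bool) : ℝ := (b.toNat : ℝ)

/-- The mean-field sum `Σ_{f(z)=1} Π_{k=1}^{3} (z_k·a + (1-z_k)·(1-a))`. -/
noncomputable def mfSum (f : Bool → Bool → Bool → Bool) (a : ℝ) : ℝ :=
  ∑ z : Bool × Bool × Bool,
    if f z.1 z.2.1 z.2.2 = true then
      (bitR z.1 * a + (1 - bitR z.1) * (1 - a)) *
        ((bitR z.2.1 * a + (1 - bitR z.2.1) * (1 - a)) *
          (bitR z.2.2 * a + (1 - bitR z.2.2) * (1 - a)))
    else 0

/-- `c₇ = f(1,1,1)`. -/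
def digit7 (f : Bool → Bool → Bool → Bool) : ℕ := (f true true true).toNat

/-- `S₂ = f(1,1,0)+f(1,0,1)+f(0,1,1)`. -/
def sum2 (f : Bool → Bool → Bool → Bool) : ℕ :=
  (f true true false).toNat + (f true false true).toNat + (f false true true).toNat

/-- `S₁ = f(1,0,0)+f(0,1,0)+f(0,0,1)`. -/
def sum1 (f : Bool → Bool → Bool → Bool) : ℕ :=
  (f true false false).toNat + (f false true false).toNat + (f false false true).toNat

lemma if_toNat (b : Bool) (X : ℝ) : (if b = true then X else 0) = (b.toNat : ℝ) * X := by
  cases b <;> simp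

lemma mfSum_eq (f : Bool → Bool → Bool → Bool) (hf : f false false false = false)
    (hc : (digit7 f : ℤ) - (sum2 f : ℤ) + (sum1 f : ℤ) = 0) (a : ℝ) :
    mfSum f a = (sum1 f : ℝ) * a + ((sum2 f : ℝ) - 2 * (sum1 f : ℝ)) * a ^ 2 := by
  have hc' : (digit7 f : ℝ) - (sum2 f : ℝ) + (sum1 f : ℝ) = 0 := by exact_mod_cast hc
  simp only [mfSum, Fintype.sum_prod_type, Fintype.sum_bool, bitR, hf, if_toNat, Bool.toNat_false, Bool.toNat_true, Nat.cast_zero, Nat.cast_one] at *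
  simp only [digit7, sum2, sum1] at hc' ⊢
  push_cast at hc' ⊢
  linear_combination a ^ 3 * hc'

theorem stmt11 (f : Bool → Bool → Bool → Bool) (hf : f false false false = false)
    (hc : (digit7 f : ℤ) - (sum2 f : ℤ) + (sum1 f : ℤ) = 0)
    (hS : 2 * sum1 f > sum2 f)
    (l : ℝ) (hl : l ∈ Set.Ioo (0:ℝ) 1) :
    (l ≤ 1 / (sum1 f : ℝ) →
      {a : ℝ | a ∈ Set.Icc (0:ℝ) 1 ∧ a = l * mfSum f a} = {0}) ∧
    (1 / (sum1 f : ℝ) < l →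
      {a : ℝ | a ∈ Set.Icc (0:ℝ) 1 ∧ a = l * mfSum f a}
          = {0, (l * (sum1 f : ℝ) - 1) / (l * (2 * (sum1 f : ℝ) - (sum2 f : ℝ)))} ∧
        (l * (sum1 f : ℝ) - 1) / (l * (2 * (sum1 f : ℝ) - (sum2 f : ℝ))) ∈ Set.Ioc (0:ℝ) 1) := by
  obtain ⟨hl0, hl1⟩ := hl
  set s1 : ℝ := (sum1 f : ℝ) with hs1def
  set s2 : ℝ := (sum2 f : ℝ) with hs2def
  have hs1n : 1 ≤ sum1 f := by omega
  have hs1 : (1:ℝ) ≤ s1 := by rw [hs1def]; exact_mod_cast hs1n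
  have hs1pos : (0:ℝ) < s1 := by linarith
  have hD : 0 < 2 * s1 - s2 := by
    have : (sum2 f : ℝ) < 2 * (sum1 f : ℝ) := by exact_mod_cast hS
    linarith
  have hd7 : digit7 f ≤ 1 := by unfold digit7; cases f true true true <;> simp
  have hceq : s2 - s1 = (digit7 f : ℝ) := by
    have h0 : ((digit7 f : ℤ) : ℝ) - ((sum2 f : ℤ) : ℝ) + ((sum1 f : ℤ) : ℝ) = 0 := by
      exact_mod_cast hc
    push_cast at h0
    rw [hs1def, hs2def]; linarith
  have hc7le : s2 - s1 ≤ 1 := by rw [hceq]; exact_mod_cast hd7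
  have hc7ge : 0 ≤ s2 - s1 := by rw [hceq]; positivity
  have hlD : 0 < l * (2 * s1 - s2) := mul_pos hl0 hD
  have key : ∀ a : ℝ, mfSum f a = s1 * a + (s2 - 2 * s1) * a ^ 2 := mfSum_eq f hf hc
  constructor
  · intro hle
    have hls1 : l * s1 ≤ 1 := by
      rw [le_div_iff₀ hs1pos] at hle; exact hle
    ext a
    simp only [Set.mem_setOf_eq, Set.mem_singleton_iff, Set.mem_Icc]
    constructor
    · rintro ⟨⟨ha0, ha1⟩, heq⟩
      rw [key] at heq
      by_contra hne
      have hapos : 0 < a := lt_of_le_of_ne ha0 (Ne.symm hne)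
      nlinarith [mul_pos hlD (mul_pos hapos hapos), mul_nonneg (mul_nonneg hapos.le (sub_nonneg.mpr hls1)) hapos.le]
    · rintro rfl
      refine ⟨⟨le_refl 0, zero_le_one⟩, ?_⟩
      rw [key]; ring
  · intro hlt
    have hls1 : 1 < l * s1 := by rw [div_lt_iff₀ hs1pos] at hlt; linarith
    set astar : ℝ := (l * s1 - 1) / (l * (2 * s1 - s2)) with hast
    have hastpos : 0 < astar := div_pos (by linarith) hlD
    have hastle : astar ≤ 1 := by
      rw [div_le_one hlD]
      nlinarith
    refine ⟨?_, hastpos, hastle⟩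
    ext a
    simp only [Set.mem_setOf_eq, Set.mem_insert_iff, Set.mem_singleton_iff, Set.mem_Icc]
    constructor
    · rintro ⟨⟨ha0, ha1⟩, heq⟩
      rw [key] at heq
      by_cases hne : a = 0
      · exact Or.inl hne
      · right
        have h2 : a * (l * (2 * s1 - s2) * a - (l * s1 - 1)) = 0 := by linear_combination heq
        rcases mul_eq_zero.mp h2 with h | h
        · exact absurd h hne
        · rw [hast]
          rw [eq_div_iff hlD.ne']
          linarith
    · rintro (rfl | rfl)
      · refine ⟨⟨le_refl 0, zero_le_one⟩, ?_⟩
        rw [key]; ring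
      · refine ⟨⟨hastpos.le, hastle⟩, ?_⟩
        rw [key]
        have hD2 : l * (2 * s1 - s2) * astar = l * s1 - 1 := by
          rw [hast]; field_simp [hlD.ne']
        linear_combination astar * hD2
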